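/- If $\mathcal{G} \subseteq 2^{[n]}$ is a family such that $F \cap F' \neq \emptyset$ for all $F, F' \in \mathcal{G}$ and $F \cup F' \neq [n]$ for all $F, F' \in \mathcal{G}$, then $|\mathcal{G}| \leq 2^{n-2}$. -/

import Mathlib

theorem IU_theorem (n : ℕ) (hn : 2 ≤ n) (G : Finset (Finset (Fin n)))
    (hI : ∀ F ∈ G, ∀ F' ∈ G, (F ∩ F').Nonempty)
    (hU : ∀ F ∈ G, ∀ F' ∈ G, F ∪ F' ≠ Finset.univ) :
    G.card ≤ 2 ^ (n - 2) := by
  classical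
  set U : Finset (Finset (Fin n)) :=
    Finset.univ.filter (fun S => ∃ F ∈ G, F ⊆ S) with hUdef
  set D : Finset (Finset (Fin n)) :=
    Finset.univ.filter (fun S => ∃ F ∈ G, S ⊆ F) with hDdef
  have hmemU : ∀ S, S ∈ U ↔ ∃ F ∈ G, F ⊆ S := by
    intro S; simp [hUdef]
  have hmemD : ∀ S, S ∈ D ↔ ∃ F ∈ G, S ⊆ F := by
    intro S; simp [hDdef]
  -- U is an upper set
  have hUup : IsUpperSet (U : Set (Finset (Fin n))) := by
    intro a b hab ha
    rw [Finset.mem_coe, hmemU] at *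
    obtain ⟨F, hF, hFa⟩ := ha
    exact ⟨F, hF, hFa.trans hab⟩
  -- D is a lower set
  have hDlow : IsLowerSet (D : Set (Finset (Fin n))) := by
    intro a b hab ha
    rw [Finset.mem_coe, hmemD] at *
    obtain ⟨F, hF, hFa⟩ := ha
    exact ⟨F, hF, hab.trans hFa⟩
  -- U is intersecting
  have hUint : (U : Set (Finset (Fin n))).Intersecting := by
    intro a ha b hb
    rw [Finset.mem_coe, hmemU] at ha hb
    obtain ⟨F, hF, hFa⟩ := ha
    obtain ⟨F', hF', hFb⟩ := hb
    obtain ⟨x, hx⟩ := hI F hF F' hF'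
    rw [Finset.mem_inter] at hx
    rw [Finset.disjoint_left]
    exact fun h => h (hFa hx.1) (hFb hx.2)
  -- complements of D form an intersecting family
  have hDcint : ((D.image (·ᶜ)) : Set (Finset (Fin n))).Intersecting := by
    intro a ha b hb
    rw [Finset.mem_coe, Finset.mem_image] at ha hb
    obtain ⟨S, hS, rfl⟩ := ha
    obtain ⟨T, hT, rfl⟩ := hb
    rw [hmemD] at hS hT
    obtain ⟨F, hF, hSF⟩ := hS
    obtain ⟨F', hF', hTF⟩ := hT
    intro hdis
    apply hU F hF F' hF'
    apply Finset.eq_univ_of_forall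
    intro x
    by_contra hx
    rw [Finset.mem_union, not_or] at hx
    have hxS : x ∈ Sᶜ := by
      simp only [Finset.mem_compl]; exact fun h => hx.1 (hSF h)
    have hxT : x ∈ Tᶜ := by
      simp only [Finset.mem_compl]; exact fun h => hx.2 (hTF h)
    exact Finset.disjoint_left.1 hdis hxS hxT
  have hcardU : 2 * U.card ≤ 2 ^ n := by
    have := hUint.card_le
    rwa [Fintype.card_finset, Fintype.card_fin] at this
  have hcardD : 2 * D.card ≤ 2 ^ n := by
    have := hDcint.card_le
    rwa [Fintype.card_finset, Fintype.card_fin,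
      Finset.card_image_of_injective _ (compl_injective)] at this
  have hGsub : G ⊆ U ∩ D := by
    intro F hF
    rw [Finset.mem_inter, hmemU, hmemD]
    exact ⟨⟨F, hF, Finset.Subset.refl _⟩, ⟨F, hF, Finset.Subset.refl _⟩⟩
  have hHK := hUup.card_inter_le_finset hDlow
  rw [Fintype.card_fin] at hHK
  have hG : G.card ≤ (U ∩ D).card := Finset.card_le_card hGsub
  -- arithmetic
  have hpow : 2 ^ n = 2 * 2 ^ (n - 1) := by
    rw [← pow_succ']
    congr 1
    omega
  have hU' : U.card ≤ 2 ^ (n - 1) := by omega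
  have hD' : D.card ≤ 2 ^ (n - 1) := by omega
  have h1 : 2 ^ n * (U ∩ D).card ≤ 2 ^ (n - 1) * 2 ^ (n - 1) :=
    hHK.trans (Nat.mul_le_mul hU' hD')
  have h2 : 2 ^ (n - 1) * 2 ^ (n - 1) = 2 ^ n * 2 ^ (n - 2) := by
    rw [← pow_add, ← pow_add]
    congr 1
    omega
  rw [h2] at h1
  have h3 := Nat.le_of_mul_le_mul_left h1 (Nat.pow_pos (by norm_num) : 0 < 2 ^ n)
  exact hG.trans h3
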